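/- Let R be a noetherian ring, δ a derivation of R, and T = R[α; δ] the differential operator ring. If δ is not an inner derivation of R and R has no proper nonzero δ-invariant ideal, then T is a simple ring. -/

import Mathlib

namespace DiffOpAux

variable {R : Type*} [Ring R] {T : Type*} [Ring T]

/-- The coefficient finsupp of an element of `T` w.r.t. the basis `α^n`. -/
noncomputable def rep (ι : R →+* T) (α : T)
    (hFree : ∀ t : T, ∃! f : ℕ →₀ R, t = f.sum fun n r => ι r * α ^ n) (t : T) : ℕ →₀ R :=
  (hFree t).choose

variable {ι : R →+* T} {α : T}
    (hFree : ∀ t : T, ∃! f : ℕ →₀ R, t = f.sum fun n r => ι r * α ^ n)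

theorem rep_spec (t : T) : t = (rep ι α hFree t).sum fun n r => ι r * α ^ n :=
  (hFree t).choose_spec.1

theorem rep_unique {t : T} {f : ℕ →₀ R} (h : t = f.sum fun n r => ι r * α ^ n) :
    rep ι α hFree t = f :=
  ((hFree t).choose_spec.2 f h).symm

theorem F_zero (n : ℕ) : ι (0 : R) * α ^ n = 0 := by simp

theorem F_add (n : ℕ) (a b : R) :
    ι (a + b) * α ^ n = ι a * α ^ n + ι b * α ^ n := by
  rw [map_add, add_mul]

theorem rep_zero : rep ι α hFree (0 : T) = 0 :=
  rep_unique hFree (by rw [Finsupp.sum_zero_index])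

theorem rep_add (s t : T) :
    rep ι α hFree (s + t) = rep ι α hFree s + rep ι α hFree t := by
  refine rep_unique hFree ?_
  rw [Finsupp.sum_add_index' F_zero F_add]
  exact congrArg₂ (· + ·) (rep_spec hFree s) (rep_spec hFree t)

theorem rep_neg (t : T) : rep ι α hFree (-t) = - rep ι α hFree t := by
  have h := rep_add hFree t (-t)
  rw [add_neg_cancel, rep_zero] at h
  exact (neg_eq_of_add_eq_zero_right h.symm).symm

theorem rep_sub (s t : T) :
    rep ι α hFree (s - t) = rep ι α hFree s - rep ι α hFree t := by
  rw [sub_eq_add_neg, rep_add, rep_neg, sub_eq_add_neg]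

theorem rep_iota (r : R) : rep ι α hFree (ι r) = Finsupp.single 0 r :=
  rep_unique hFree (by rw [Finsupp.sum_single_index (F_zero 0)]; simp)

theorem rep_iota_mul (r : R) (t : T) :
    rep ι α hFree (ι r * t) = (rep ι α hFree t).mapRange (r * ·) (mul_zero r) := by
  refine rep_unique hFree ?_
  rw [Finsupp.sum_mapRange_index (fun n => by simpa using F_zero n)]
  conv_lhs => rw [rep_spec hFree t, Finsupp.mul_sum]
  exact Finsupp.sum_congr fun n _ => by rw [← mul_assoc, ← map_mul]

theorem rep_mul_alpha (t : T) :
    rep ι α hFree (t * α) = Finsupp.mapDomain Nat.succ (rep ι α hFree t) := by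
  refine rep_unique hFree ?_
  rw [Finsupp.sum_mapDomain_index F_zero F_add]
  conv_lhs => rw [rep_spec hFree t, Finsupp.sum_mul]
  exact Finsupp.sum_congr fun n _ => by rw [mul_assoc, ← pow_succ]

theorem rep_alpha_mul (δ : R →+ R) (hOre : ∀ r : R, α * ι r = ι r * α + ι (δ r)) (t : T) :
    rep ι α hFree (α * t) =
      Finsupp.mapDomain Nat.succ (rep ι α hFree t)
        + (rep ι α hFree t).mapRange δ δ.map_zero := by
  refine rep_unique hFree ?_
  rw [Finsupp.sum_add_index' F_zero F_add,
    Finsupp.sum_mapDomain_index F_zero F_add,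
    Finsupp.sum_mapRange_index (fun n => by simpa using F_zero n)]
  conv_lhs => rw [rep_spec hFree t, Finsupp.mul_sum]
  rw [← Finsupp.sum_add]
  refine Finsupp.sum_congr fun n _ => ?_
  rw [← mul_assoc, hOre, add_mul, mul_assoc, ← pow_succ']

theorem coeff_alpha_mul_zero (δ : R →+ R) (hOre : ∀ r : R, α * ι r = ι r * α + ι (δ r)) (t : T) :
    rep ι α hFree (α * t) 0 = δ (rep ι α hFree t 0) := by
  rw [rep_alpha_mul hFree δ hOre, Finsupp.add_apply,
    Finsupp.mapDomain_notin_range _ _ (by simp [Nat.succ_ne_zero]), Finsupp.mapRange_apply,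
    zero_add]

theorem coeff_alpha_mul_succ (δ : R →+ R) (hOre : ∀ r : R, α * ι r = ι r * α + ι (δ r))
    (t : T) (k : ℕ) :
    rep ι α hFree (α * t) (k + 1) = rep ι α hFree t k + δ (rep ι α hFree t (k + 1)) := by
  rw [rep_alpha_mul hFree δ hOre, Finsupp.add_apply,
    Finsupp.mapDomain_apply Nat.succ_injective, Finsupp.mapRange_apply]

theorem mul_iota (δ : R →+ R) (hLeib : ∀ a b : R, δ (a * b) = a * δ b + δ a * b)
    (hOre : ∀ r : R, α * ι r = ι r * α + ι (δ r)) (r : R) :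
    ∀ n : ℕ, ∀ t : T, (∀ k, n < k → rep ι α hFree t k = 0) →
      (∀ k, n < k → rep ι α hFree (t * ι r) k = 0) ∧
      rep ι α hFree (t * ι r) n = rep ι α hFree t n * r ∧
      (∀ m, n = m + 1 →
        rep ι α hFree (t * ι r) m
          = rep ι α hFree t m * r + n • (rep ι α hFree t n * δ r)) := by
  intro n
  induction n with
  | zero =>
    intro t hD
    have hrep : rep ι α hFree t = Finsupp.single 0 (rep ι α hFree t 0) := by
      ext k
      cases k with
      | zero => simp
      | succ k => rw [hD _ (Nat.succ_pos k), Finsupp.single_eq_of_ne' (Nat.succ_ne_zero k).symm]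
    have ht : t = ι (rep ι α hFree t 0) := by
      conv_lhs => rw [rep_spec hFree t, hrep]
      rw [Finsupp.sum_single_index (F_zero 0)]
      simp
    have h2 : t * ι r = ι (rep ι α hFree t 0 * r) := by
      rw [map_mul]; exact congrArg (· * ι r) ht
    refine ⟨fun k hk => ?_, ?_, fun m hm => by omega⟩
    · rw [h2, rep_iota, Finsupp.single_eq_of_ne' (by omega)]
    · rw [h2, rep_iota, Finsupp.single_eq_same]
  | succ n ih =>
    intro t hD
    set c := rep ι α hFree t with hc
    set fs : ℕ →₀ R := Finsupp.comapDomain Nat.succ c Nat.succ_injective.injOn with hfs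
    set s : T := fs.sum fun n r => ι r * α ^ n with hsdef
    have hs : rep ι α hFree s = fs := rep_unique hFree rfl
    have hsk : ∀ k, rep ι α hFree s k = c (k + 1) := fun k => by
      rw [hs, hfs, Finsupp.comapDomain_apply]
    have hDs : ∀ k, n < k → rep ι α hFree s k = 0 := fun k hk => by
      rw [hsk]; exact hD _ (by omega)
    set w : T := t - α * s with hwdef
    have hw : ∀ k, rep ι α hFree w k =
        c k - rep ι α hFree (α * s) k := fun k => by
      rw [hwdef, rep_sub, Finsupp.sub_apply, hc]
    have hcw0 : rep ι α hFree w 0 = c 0 - δ (c 1) := by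
      rw [hw, coeff_alpha_mul_zero hFree δ hOre, hsk]
    have hcwS : ∀ k, rep ι α hFree w (k + 1) = - δ (c (k + 2)) := fun k => by
      rw [hw, coeff_alpha_mul_succ hFree δ hOre, hsk, hsk]
      abel
    have hDw : ∀ k, n < k → rep ι α hFree w k = 0 := by
      intro k hk
      obtain ⟨k', rfl⟩ : ∃ k', k = k' + 1 := ⟨k - 1, by omega⟩
      rw [hcwS, hD _ (by omega : n + 1 < k' + 2), map_zero, neg_zero]
    obtain ⟨hDs', hcs2, hcs3⟩ := ih s hDs
    obtain ⟨hDw', hcw2, _⟩ := ih w hDw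
    have ht : t * ι r = α * (s * ι r) + w * ι r := by
      rw [hwdef, sub_mul, mul_assoc, ← sub_eq_iff_eq_add']
    have hck : ∀ k, rep ι α hFree (t * ι r) k
        = rep ι α hFree (α * (s * ι r)) k + rep ι α hFree (w * ι r) k := fun k => by
      rw [ht, rep_add, Finsupp.add_apply]
    refine ⟨fun k hk => ?_, ?_, fun m hm => ?_⟩
    · obtain ⟨k', rfl⟩ : ∃ k', k = k' + 1 := ⟨k - 1, by omega⟩
      rw [hck, coeff_alpha_mul_succ hFree δ hOre, hDs' _ (by omega), hDs' _ (by omega),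
        hDw' _ (by omega), map_zero]
      abel
    · rw [hck, coeff_alpha_mul_succ hFree δ hOre, hcs2, hsk,
        hDs' _ (by omega : n < n + 1), hDw' _ (by omega : n < n + 1), map_zero]
      abel
    · have hmn : n = m := by omega
      subst hmn
      cases n with
      | zero =>
        rw [hck, coeff_alpha_mul_zero hFree δ hOre, hcs2, hsk, hcw2, hcw0, hLeib, sub_mul]
        simp only [one_nsmul, zero_add]
        abel
      | succ n' =>
        rw [hck, coeff_alpha_mul_succ hFree δ hOre,
          hcs3 n' rfl, hsk, hsk, hcs2, hsk, hcw2, hcwS, hLeib, neg_mul,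
          succ_nsmul (c (n' + 1 + 1) * δ r) (n' + 1)]
        abel

theorem coeff_comm_alpha (δ : R →+ R) (hOre : ∀ r : R, α * ι r = ι r * α + ι (δ r))
    (t : T) (k : ℕ) :
    rep ι α hFree (α * t - t * α) k = δ (rep ι α hFree t k) := by
  rw [rep_sub, rep_alpha_mul hFree δ hOre, rep_mul_alpha hFree]
  simp [Finsupp.mapRange_apply]

end DiffOpAux
/-- Let `R` be a noetherian ℚ-algebra (characteristic `0`), `δ` a derivation of `R`,
and `T = R[α; δ]` the differential operator ring (encoded by a ring embedding
`ι : R →+* T` and an element `α` with `α·ιr = ιr·α + ι(δ r)`, such that `T` is free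
as a left `R`-module on the powers of `α`).  If `δ` is not inner and `R` has no
proper nonzero `δ`-invariant two-sided ideal, then `T` is a simple ring. -/
theorem diff_op_ring_simple {R : Type*} [Ring R] [Algebra ℚ R] [IsNoetherianRing R]
    (δ : R →+ R) (hLeib : ∀ a b : R, δ (a * b) = a * δ b + δ a * b)
    (T : Type*) [Ring T] (ι : R →+* T) (hι : Function.Injective ι) (α : T)
    (hOre : ∀ r : R, α * ι r = ι r * α + ι (δ r))
    (hFree : ∀ t : T, ∃! f : ℕ →₀ R, t = f.sum fun n r => ι r * α ^ n)
    (hNotInner : ¬ ∃ a : R, ∀ r : R, δ r = a * r - r * a)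
    (hNoInv : ∀ I : TwoSidedIdeal R, (∀ x ∈ I, δ x ∈ I) → I = ⊥ ∨ I = ⊤) :
    ∀ J : TwoSidedIdeal T, J = ⊥ ∨ J = ⊤ := by
  intro J
  classical
  by_cases hJ : ∀ t ∈ J, t = 0
  · exact Or.inl (TwoSidedIdeal.ext fun x =>
      ⟨fun h => (TwoSidedIdeal.mem_bot T).2 (hJ x h),
       fun h => by rw [(TwoSidedIdeal.mem_bot T).1 h]; exact J.zero_mem⟩)
  push_neg at hJ
  obtain ⟨t0, ht0J, ht0⟩ := hJ
  right
  set rp : T → ℕ →₀ R := DiffOpAux.rep ι α hFree with hrp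
  -- minimal degree of a nonzero element of J
  have hex : ∃ n : ℕ, ∃ t, t ∈ J ∧ t ≠ 0 ∧ ∀ k, n < k → rp t k = 0 := by
    refine ⟨(rp t0).support.sup id, t0, ht0J, ht0, fun k hk => ?_⟩
    by_contra h
    have := Finset.le_sup (f := id) (Finsupp.mem_support_iff.2 h)
    simp only [id] at this
    omega
  set n : ℕ := Nat.find hex with hn
  obtain ⟨tmin, htminJ, htmin0, htminD⟩ := Nat.find_spec hex
  -- the set of leading coefficients
  set carrier : Set R :=
    {x | ∃ t, t ∈ J ∧ (∀ k, n < k → rp t k = 0) ∧ rp t n = x} with hcar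
  have hzero : (0 : R) ∈ carrier :=
    ⟨0, J.zero_mem, by simp [hrp, DiffOpAux.rep_zero], by simp [hrp, DiffOpAux.rep_zero]⟩
  have hadd : ∀ {x y : R}, x ∈ carrier → y ∈ carrier → x + y ∈ carrier := by
    rintro x y ⟨t₁, h₁J, h₁D, rfl⟩ ⟨t₂, h₂J, h₂D, rfl⟩
    exact ⟨t₁ + t₂, J.add_mem h₁J h₂J,
      fun k hk => by rw [hrp, DiffOpAux.rep_add, Finsupp.add_apply, ← hrp, h₁D k hk, h₂D k hk,
        add_zero],
      by rw [hrp, DiffOpAux.rep_add, Finsupp.add_apply]⟩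
  have hneg : ∀ {x : R}, x ∈ carrier → -x ∈ carrier := by
    rintro x ⟨t, hJ', hD, rfl⟩
    exact ⟨-t, J.neg_mem hJ',
      fun k hk => by rw [hrp, DiffOpAux.rep_neg, Finsupp.neg_apply, ← hrp, hD k hk, neg_zero],
      by rw [hrp, DiffOpAux.rep_neg, Finsupp.neg_apply]⟩
  have hmulleft : ∀ {x y : R}, y ∈ carrier → x * y ∈ carrier := by
    rintro x y ⟨t, hJ', hD, rfl⟩
    exact ⟨ι x * t, J.mul_mem_left _ _ hJ',
      fun k hk => by rw [hrp, DiffOpAux.rep_iota_mul, Finsupp.mapRange_apply, ← hrp, hD k hk,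
        mul_zero],
      by rw [hrp, DiffOpAux.rep_iota_mul, Finsupp.mapRange_apply]⟩
  have hmulright : ∀ {x y : R}, x ∈ carrier → x * y ∈ carrier := by
    rintro x y ⟨t, hJ', hD, rfl⟩
    obtain ⟨hD', hc, -⟩ := DiffOpAux.mul_iota hFree δ hLeib hOre y n t hD
    rw [← hrp] at hD' hc
    exact ⟨t * ι y, J.mul_mem_right _ _ hJ', hD', hc⟩
  set I : TwoSidedIdeal R := TwoSidedIdeal.mk' carrier hzero hadd hneg hmulleft hmulright
    with hI
  have hmemI : ∀ x : R, x ∈ I ↔ x ∈ carrier := fun x =>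
    TwoSidedIdeal.mem_mk' carrier hzero hadd hneg hmulleft hmulright x
  -- I is δ-invariant
  have hInv : ∀ x ∈ I, δ x ∈ I := by
    intro x hx
    obtain ⟨t, hJ', hD, rfl⟩ := (hmemI x).1 hx
    refine (hmemI _).2 ⟨α * t - t * α,
      J.sub_mem (J.mul_mem_left _ _ hJ') (J.mul_mem_right _ _ hJ'), fun k hk => ?_, ?_⟩
    · rw [hrp, DiffOpAux.coeff_comm_alpha hFree δ hOre, ← hrp, hD k hk, map_zero]
    · rw [hrp, DiffOpAux.coeff_comm_alpha hFree δ hOre]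
  -- I is nonzero
  have hlead : rp tmin n ≠ 0 := by
    intro h0
    rcases Nat.eq_zero_or_pos n with hn0 | hnpos
    · apply htmin0
      have : rp tmin = 0 := by
        ext k
        simp only [Finsupp.coe_zero, Pi.zero_apply]
        rcases Nat.eq_zero_or_pos k with rfl | hk
        · exact hn0 ▸ h0
        · exact htminD k (by omega)
      rw [DiffOpAux.rep_spec hFree tmin, ← hrp, this, Finsupp.sum_zero_index]
    · refine absurd ?_ (Nat.find_min hex (m := n - 1) (by omega))
      refine ⟨tmin, htminJ, htmin0, fun k hk => ?_⟩
      rcases eq_or_lt_of_le (show n ≤ k by omega) with rfl | hk'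
      · exact h0
      · exact htminD k hk'
  have hIne : I ≠ ⊥ := by
    intro hbot
    exact hlead ((TwoSidedIdeal.mem_bot R).1
      (hbot ▸ (hmemI _).2 ⟨tmin, htminJ, htminD, rfl⟩))
  have hItop : I = ⊤ := (hNoInv I hInv).resolve_left hIne
  -- get a monic element of J of degree n
  obtain ⟨p, hpJ, hpD, hp1⟩ : (1 : R) ∈ carrier := (hmemI 1).1 (hItop ▸ TwoSidedIdeal.mem_top R)
  rcases Nat.eq_zero_or_pos n with hn0 | hnpos
  · -- degree 0 : p = 1 ∈ J
    have hrep : rp p = Finsupp.single 0 1 := by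
      ext k
      rcases Nat.eq_zero_or_pos k with rfl | hk
      · rw [Finsupp.single_eq_same]; exact hn0 ▸ hp1
      · rw [hpD k (by omega), Finsupp.single_eq_of_ne (by omega)]
    have hp : p = 1 := by
      rw [DiffOpAux.rep_spec hFree p, ← hrp, hrep,
        Finsupp.sum_single_index (DiffOpAux.F_zero 0)]
      simp
    exact J.eq_top (hp ▸ hpJ)
  · -- degree n = m + 1 : derive that δ is inner, contradiction
    exfalso
    obtain ⟨m, hm⟩ : ∃ m, n = m + 1 := ⟨n - 1, by omega⟩
    set b : R := rp p m with hb
    have key : ∀ r : R, (n : ℕ) • δ r = r * b - b * r := by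
      intro r
      obtain ⟨hD', hc2, hc3⟩ := DiffOpAux.mul_iota hFree δ hLeib hOre r n p hpD
      rw [← hrp] at hD' hc2 hc3
      set q : T := p * ι r - ι r * p with hq
      have hqk : ∀ k, rp q k = rp (p * ι r) k - r * rp p k := fun k => by
        rw [hq, hrp, DiffOpAux.rep_sub, Finsupp.sub_apply, DiffOpAux.rep_iota_mul,
          Finsupp.mapRange_apply]
      have hqD : ∀ k, m < k → rp q k = 0 := by
        intro k hk
        rcases eq_or_lt_of_le (show n ≤ k by omega) with rfl | hk'
        · rw [hqk, hc2, hp1, one_mul, mul_one, sub_self]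
        · rw [hqk, hD' k hk', hpD k hk', mul_zero, sub_zero]
      have hq0 : q = 0 := by
        by_contra hq0
        exact absurd ⟨q, J.sub_mem (J.mul_mem_right _ _ hpJ) (J.mul_mem_left _ _ hpJ), hq0, hqD⟩
          (Nat.find_min hex (m := m) (by omega))
      have : rp q m = 0 := by rw [hq0, hrp, DiffOpAux.rep_zero]; rfl
      rw [hqk, hc3 m hm, hp1, one_mul] at this
      have h2 := sub_eq_zero.1 this
      rw [eq_sub_iff_add_eq, ← h2]
      abel
    exact hNotInner ⟨-((n : ℚ)⁻¹ • b), fun r => by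
      have h1 : ((n : ℚ)⁻¹ • ((n : ℕ) • δ r)) = δ r := by
        rw [← Nat.cast_smul_eq_nsmul ℚ, smul_smul, inv_mul_cancel₀ (by
          exact_mod_cast (by omega : (n : ℕ) ≠ 0)), one_smul]
      calc δ r = (n : ℚ)⁻¹ • ((n : ℕ) • δ r) := h1.symm
        _ = (n : ℚ)⁻¹ • (r * b - b * r) := by rw [key r]
        _ = -((n : ℚ)⁻¹ • b) * r - r * -((n : ℚ)⁻¹ • b) := by
            rw [smul_sub, neg_mul, mul_neg, sub_neg_eq_add, mul_smul_comm, smul_mul_assoc]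
            abel⟩
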